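/- Let Ω be an algebraically closed field of characteristic 0 equipped with a W-algebra structure, and let ψ₁, ψ₂ : S ⊗_W Ω → Ω be Ω-algebra homomorphisms whose kernels lie in the same connected component of PrimeSpectrum(S ⊗_W Ω). Then the characteristic polynomials of the matrices ψ₁(σ) and ψ₂(σ) (the images under ψ₁ and ψ₂ of the universal matrix σ) are equal. -/

import Mathlib

set_option linter.unusedSectionVars false
open MvPolynomial Matrix

noncomputable section

/-- Index type for the `2n²` variables: left summand for the entries of `Fr`,
right summand for the entries of `σ`. -/
abbrev MatVar (n : ℕ) : Type := (Fin n × Fin n) ⊕ (Fin n × Fin n)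

variable (W : Type) [CommRing W] (n q : ℕ)

/-- The universal matrix `Fr` of indeterminates. -/
def frPoly : Matrix (Fin n) (Fin n) (MvPolynomial (MatVar n) W) :=
  Matrix.of fun i j => X (Sum.inl (i, j))

/-- The universal matrix `σ` of indeterminates. -/
def sigPoly : Matrix (Fin n) (Fin n) (MvPolynomial (MatVar n) W) :=
  Matrix.of fun i j => X (Sum.inr (i, j))

/-- The element `det Fr · det σ` at which we localize. -/
def detElt : MvPolynomial (MatVar n) W := (frPoly W n).det * (sigPoly W n).det

/-- The localization of the polynomial ring at `det Fr · det σ`. -/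
abbrev LocS : Type := Localization.Away (detElt W n)

/-- The matrix `Fr` over the localization. -/
def frLoc : Matrix (Fin n) (Fin n) (LocS W n) :=
  (frPoly W n).map (algebraMap (MvPolynomial (MatVar n) W) (LocS W n))

/-- The matrix `σ` over the localization. -/
def sigLoc : Matrix (Fin n) (Fin n) (LocS W n) :=
  (sigPoly W n).map (algebraMap (MvPolynomial (MatVar n) W) (LocS W n))

/-- The ideal generated by the `n²` entries of `Fr·σ − σ^q·Fr`. -/
def relIdeal : Ideal (LocS W n) :=
  Ideal.span {x | ∃ i j, x = (frLoc W n * sigLoc W n - sigLoc W n ^ q * frLoc W n) i j}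

/-- The ring `S = S_{q,n}`: the polynomial ring over `W` in the `2n²` matrix entries,
localized at `det Fr · det σ`, modulo the `n²` entries of `Fr·σ − σ^q·Fr`. -/
def Sring : Type := LocS W n ⧸ relIdeal W n q

instance : CommRing (Sring W n q) := Ideal.Quotient.commRing _

instance : Algebra W (Sring W n q) := Ideal.Quotient.algebra _

/-- The universal matrix `Fr` over `S`. -/
def frS : Matrix (Fin n) (Fin n) (Sring W n q) :=
  (frLoc W n).map (Ideal.Quotient.mk (relIdeal W n q))

/-- The universal matrix `σ` over `S`. -/
def sigS : Matrix (Fin n) (Fin n) (Sring W n q) :=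
  (sigLoc W n).map (Ideal.Quotient.mk (relIdeal W n q))

/-! The distinguished point `x₀`, its connected component `X⁰`, and the ideal `I`. -/

variable (l : ℕ) [Fact l.Prime] (k : Type) [Field k] [IsAlgClosed k] [CharP k l]

/-- The Witt vectors `W(k)`. -/
abbrev Wk : Type := WittVector l k

/-- The canonical residue homomorphism `W(k) → k`, `w ↦ w₀`. -/
def resHom : Wk l k →+* k := WittVector.ghostComponent 0

/-- `k` as a `W(k)`-algebra via the residue map. -/
instance : Algebra (Wk l k) k := (resHom l k).toAlgebra

/-- The point with both matrices equal to the identity. -/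
def diagVal : MatVar n → k := fun v =>
  Sum.elim (fun ij => if ij.1 = ij.2 then (1 : k) else 0)
    (fun ij => if ij.1 = ij.2 then (1 : k) else 0) v

/-- Evaluation of polynomials at the identity point. -/
def evalPoly : MvPolynomial (MatVar n) (Wk l k) →ₐ[Wk l k] k := aeval (diagVal n k)

lemma frPoly_eval : (frPoly (Wk l k) n).map (evalPoly n l k) = 1 := by
  ext i j
  simp [frPoly, evalPoly, diagVal, Matrix.one_apply, Matrix.map_apply]

lemma sigPoly_eval : (sigPoly (Wk l k) n).map (evalPoly n l k) = 1 := by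
  ext i j
  simp [sigPoly, evalPoly, diagVal, Matrix.one_apply, Matrix.map_apply]

lemma isUnit_eval_detElt : IsUnit (evalPoly n l k (detElt (Wk l k) n)) := by
  have h1 : (evalPoly n l k) ((frPoly (Wk l k) n).det) = 1 := by
    rw [AlgHom.map_det, AlgHom.mapMatrix_apply, frPoly_eval, Matrix.det_one]
  have h2 : (evalPoly n l k) ((sigPoly (Wk l k) n).det) = 1 := by
    rw [AlgHom.map_det, AlgHom.mapMatrix_apply, sigPoly_eval, Matrix.det_one]
  rw [detElt, _root_.map_mul, h1, h2, mul_one]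
  exact isUnit_one

/-- Evaluation at the identity point, extended to the localization. -/
def evalLoc : LocS (Wk l k) n →+* k :=
  Localization.awayLift (evalPoly n l k).toRingHom (detElt (Wk l k) n) (isUnit_eval_detElt n l k)

lemma evalLoc_algebraMap (x : MvPolynomial (MatVar n) (Wk l k)) :
    evalLoc n l k (algebraMap (MvPolynomial (MatVar n) (Wk l k)) (LocS (Wk l k) n) x) =
      evalPoly n l k x := by
  simp [evalLoc, Localization.awayLift, IsLocalization.Away.lift_eq]

lemma relIdeal_le_ker : relIdeal (Wk l k) n q ≤ RingHom.ker (evalLoc n l k) := by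
  rw [relIdeal, Ideal.span_le]
  rintro x ⟨i, j, rfl⟩
  simp only [SetLike.mem_coe, RingHom.mem_ker]
  have hfr : (frLoc (Wk l k) n).map (evalLoc n l k) = 1 := by
    rw [frLoc, Matrix.map_map]
    have hcomp : (evalLoc n l k) ∘
        (algebraMap (MvPolynomial (MatVar n) (Wk l k)) (LocS (Wk l k) n))
        = evalPoly n l k := by
      funext x; exact evalLoc_algebraMap n l k x
    rw [hcomp]
    exact frPoly_eval n l k
  have hsig : (sigLoc (Wk l k) n).map (evalLoc n l k) = 1 := by
    rw [sigLoc, Matrix.map_map]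
    have hcomp : (evalLoc n l k) ∘
        (algebraMap (MvPolynomial (MatVar n) (Wk l k)) (LocS (Wk l k) n))
        = evalPoly n l k := by
      funext x; exact evalLoc_algebraMap n l k x
    rw [hcomp]
    exact sigPoly_eval n l k
  have key : (frLoc (Wk l k) n * sigLoc (Wk l k) n
      - sigLoc (Wk l k) n ^ q * frLoc (Wk l k) n).map (evalLoc n l k) = 0 := by
    have h0 : (RingHom.mapMatrix (evalLoc n l k) (m := Fin n))
        (frLoc (Wk l k) n * sigLoc (Wk l k) n
          - sigLoc (Wk l k) n ^ q * frLoc (Wk l k) n) = 0 := by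
      rw [map_sub, _root_.map_mul, _root_.map_mul, map_pow]
      simp only [RingHom.mapMatrix_apply]
      rw [hfr, hsig]
      simp
    simpa only [RingHom.mapMatrix_apply] using h0
  calc (evalLoc n l k) ((frLoc (Wk l k) n * sigLoc (Wk l k) n
      - sigLoc (Wk l k) n ^ q * frLoc (Wk l k) n) i j)
      = ((frLoc (Wk l k) n * sigLoc (Wk l k) n
      - sigLoc (Wk l k) n ^ q * frLoc (Wk l k) n).map (evalLoc n l k)) i j := rfl
    _ = 0 := by rw [key]; rfl

/-- Evaluation at the identity point, as a homomorphism `S → k`. -/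
def evalS : Sring (Wk l k) n q →+* k :=
  Ideal.Quotient.lift (relIdeal (Wk l k) n q) (evalLoc n l k)
    (fun _ ha => RingHom.mem_ker.mp (relIdeal_le_ker n q l k ha))

/-- The point `x₀` of `Spec S`: the kernel of the evaluation sending `Fr` and `σ`
to the identity matrix. -/
def x0 : PrimeSpectrum (Sring (Wk l k) n q) :=
  ⟨RingHom.ker (evalS n q l k), RingHom.ker_isPrime _⟩

/-- The connected component `X⁰` of `x₀` in `Spec S`. -/
def Xcomp : Set (PrimeSpectrum (Sring (Wk l k) n q)) := connectedComponent (x0 n q l k)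

/-- The ideal `I`: the intersection of all primes belonging to `X⁰`. -/
def Iideal : Ideal (Sring (Wk l k) n q) :=
  ⨅ (P : PrimeSpectrum (Sring (Wk l k) n q)) (_ : P ∈ Xcomp n q l k), P.asIdeal


open scoped TensorProduct

set_option maxHeartbeats 1000000
set_option synthInstance.maxHeartbeats 400000


section MyHelpers
open Polynomial

lemma my_scalar_eq {K : Type} [CommRing K] (n : ℕ) (x : K) :
    Matrix.scalar (Fin n) x = algebraMap K (Matrix (Fin n) (Fin n) K) x := by
  ext i j
  simp [Matrix.scalar_apply, Matrix.algebraMap_matrix_apply, Matrix.diagonal]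

lemma my_charpoly_eval {K : Type} [CommRing K] {n : ℕ} (M : Matrix (Fin n) (Fin n) K) (x : K) :
    M.charpoly.eval x = (Matrix.scalar (Fin n) x - M).det := by
  rw [Matrix.charpoly, ← Polynomial.coe_evalRingHom, RingHom.map_det]
  congr 1
  ext i j
  by_cases h : i = j
  · subst h
    simp [Matrix.charmatrix_apply_eq, Matrix.scalar_apply, Matrix.sub_apply,
      Matrix.diagonal_apply_eq]
  · simp [Matrix.charmatrix_apply_ne _ _ _ h, Matrix.scalar_apply, Matrix.sub_apply,
      Matrix.diagonal_apply_ne _ h]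

lemma my_det_aeval {K : Type} [Field K] [IsAlgClosed K] {n : ℕ} (M : Matrix (Fin n) (Fin n) K)
    (R : Multiset K) (hcard : Multiset.card R = n)
    (hfact : M.charpoly = (R.map fun a => Polynomial.X - Polynomial.C a).prod)
    (p : K[X]) :
    (Polynomial.aeval M p).det = (R.map fun a => p.eval a).prod := by
  have hpfact : p = Polynomial.C p.leadingCoeff * (p.roots.map fun a => Polynomial.X - Polynomial.C a).prod :=
    (IsAlgClosed.splits p).eq_prod_roots
  set L := p.roots.toList with hLdef
  have hL : (L : Multiset K) = p.roots := Multiset.coe_toList _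
  -- determinant of M minus a scalar
  have hdet1 : ∀ a : K, (M - Matrix.scalar (Fin n) a).det = (R.map fun l => l - a).prod := by
    intro a
    have h1 : M.charpoly.eval a = (R.map fun l => a - l).prod := by
      rw [hfact, Polynomial.eval_multiset_prod, Multiset.map_map]
      congr 1
      apply Multiset.map_congr rfl
      intro l _
      simp
    have h2 := my_charpoly_eval M a
    have h3 : M - Matrix.scalar (Fin n) a = -(Matrix.scalar (Fin n) a - M) := by rw [neg_sub]
    have h4 : (R.map fun l => l - a) = (R.map fun l => a - l).map Neg.neg := by
      rw [Multiset.map_map]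
      apply Multiset.map_congr rfl
      intro l _
      simp
    rw [h3, Matrix.det_neg, Fintype.card_fin, ← h2, h1, h4, Multiset.prod_map_neg,
      Multiset.card_map, hcard]
  -- eval of p at an element
  have heval : ∀ l : K, p.eval l = p.leadingCoeff * (p.roots.map fun a => l - a).prod := by
    intro l
    conv_lhs => rw [hpfact]
    rw [Polynomial.eval_mul, Polynomial.eval_C, Polynomial.eval_multiset_prod, Multiset.map_map]
    congr 2
    apply Multiset.map_congr rfl
    intro a _
    simp
  -- left side
  have hlist : Polynomial.aeval M p =
      algebraMap K (Matrix (Fin n) (Fin n) K) p.leadingCoeff *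
        (L.map fun a => M - Matrix.scalar (Fin n) a).prod := by
    conv_lhs => rw [hpfact]
    rw [_root_.map_mul, Polynomial.aeval_C, ← hL, Multiset.map_coe, Multiset.prod_coe, map_list_prod,
      List.map_map]
    congr 2
    apply List.map_congr_left
    intro a _
    simp only [Function.comp_apply, _root_.map_sub, Polynomial.aeval_X, Polynomial.aeval_C, my_scalar_eq]
  have hlhs : (Polynomial.aeval M p).det =
      p.leadingCoeff ^ n * (p.roots.map fun a => (R.map fun l => l - a).prod).prod := by
    rw [hlist, Matrix.det_mul, ← my_scalar_eq, Matrix.scalar_apply, Matrix.det_diagonal,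
      Finset.prod_const, Finset.card_univ, Fintype.card_fin]
    congr 1
    have hdetprod : (List.map (fun a => M - Matrix.scalar (Fin n) a) L).prod.det
        = (List.map (fun a => (M - Matrix.scalar (Fin n) a).det) L).prod := by
      have h5 := MonoidHom.map_list_prod (Matrix.detMonoidHom)
        (List.map (fun a => M - Matrix.scalar (Fin n) a) L)
      simpa [List.map_map, Matrix.coe_detMonoidHom, Function.comp_def] using h5
    rw [hdetprod, ← hL, Multiset.map_coe, Multiset.prod_coe]
    congr 1
    apply List.map_congr_left
    intro a _
    exact hdet1 a
  rw [hlhs]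
  -- right side
  have hrhs : (R.map fun l => p.eval l).prod =
      p.leadingCoeff ^ n * (R.map fun l => (p.roots.map fun a => l - a).prod).prod := by
    rw [show (R.map fun l => p.eval l) =
        R.map fun l => p.leadingCoeff * (p.roots.map fun a => l - a).prod from
      Multiset.map_congr rfl fun l _ => heval l]
    rw [Multiset.prod_map_mul]
    congr 1
    rw [Multiset.map_const', Multiset.prod_replicate, hcard]
  rw [hrhs]
  congr 1
  exact Multiset.prod_map_prod_map p.roots R

lemma my_charpoly_pow {K : Type} [Field K] [IsAlgClosed K] {n q : ℕ}
    (M : Matrix (Fin n) (Fin n) K) (R : Multiset K) (hcard : Multiset.card R = n)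
    (hfact : M.charpoly = (R.map fun a => Polynomial.X - Polynomial.C a).prod) :
    (M ^ q).charpoly = (R.map fun a => Polynomial.X - Polynomial.C (a ^ q)).prod := by
  apply Polynomial.funext
  intro x
  have h1 : Matrix.scalar (Fin n) x - M ^ q = Polynomial.aeval M (Polynomial.C x - Polynomial.X ^ q) := by
    rw [_root_.map_sub, Polynomial.aeval_C, _root_.map_pow, Polynomial.aeval_X, my_scalar_eq]
  rw [my_charpoly_eval, h1, my_det_aeval M R hcard hfact, Polynomial.eval_multiset_prod,
    Multiset.map_map]
  congr 1
  apply Multiset.map_congr rfl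
  intro a _
  simp

lemma my_iterate_fix {K : Type} (f : K → K) (R : Multiset K)
    (h : R.map f = R) {m : ℕ} (hm : Multiset.card R ≤ m) :
    ∀ a ∈ R, f^[Nat.factorial m] a = a := by
  classical
  set t := R.toFinset with ht
  have himg : t.image f = t := by rw [ht, ← Multiset.toFinset_map, h]
  have hmemf : ∀ x : K, x ∈ t → f x ∈ t := fun x hx => himg ▸ Finset.mem_image_of_mem f hx
  let g : {x // x ∈ t} → {x // x ∈ t} := fun x => ⟨f x.1, hmemf x.1 x.2⟩
  have hsurj : Function.Surjective g := by
    rintro ⟨y, hy⟩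
    rw [← himg] at hy
    obtain ⟨x, hx, hfx⟩ := Finset.mem_image.mp hy
    exact ⟨⟨x, hx⟩, Subtype.ext hfx⟩
  have hbij : Function.Bijective g := ⟨Finite.injective_iff_surjective.mpr hsurj, hsurj⟩
  let e : Equiv.Perm {x // x ∈ t} := Equiv.ofBijective g hbij
  have hiter : ∀ (j : ℕ) (x : {x // x ∈ t}), ((e ^ j) x).1 = f^[j] x.1 := by
    intro j
    induction j with
    | zero => intro x; simp
    | succ j ih =>
      intro x
      rw [pow_succ, Equiv.Perm.mul_apply, ih, Function.iterate_succ_apply]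
      rfl
  have horder : e ^ (Nat.factorial m) = 1 := by
    have h1 : orderOf e ∣ Nat.factorial (Fintype.card {x // x ∈ t}) := by
      have h2 := orderOf_dvd_card (x := e)
      rwa [Fintype.card_perm] at h2
    have h2 : Nat.factorial (Fintype.card {x // x ∈ t}) ∣ Nat.factorial m := by
      apply Nat.factorial_dvd_factorial
      rw [Fintype.card_coe]
      exact le_trans (Multiset.toFinset_card_le R) hm
    exact orderOf_dvd_iff_pow_eq_one.mp (h1.trans h2)
  intro a ha
  have hat : a ∈ t := Multiset.mem_toFinset.mpr ha
  have h3 := hiter (Nat.factorial m) ⟨a, hat⟩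
  rw [horder] at h3
  simpa using h3.symm

lemma my_main {K : Type} [Field K] [IsAlgClosed K] {n q : ℕ}
    (Mt Ct : Matrix (Fin n) (Fin n) K) (hdet : IsUnit Ct.det) (hrel : Ct * Mt = Mt ^ q * Ct) :
    ∃ s : Multiset K, Multiset.card s = n ∧ (∀ a ∈ s, a ^ q ^ (Nat.factorial n) = a) ∧
      Mt.charpoly = (s.map fun a => Polynomial.X - Polynomial.C a).prod := by
  obtain ⟨u, hu⟩ := (Matrix.isUnit_iff_isUnit_det Ct).mpr hdet
  set U : Matrix (Fin n) (Fin n) K := (↑u : Matrix (Fin n) (Fin n) K) with hU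
  set V : Matrix (Fin n) (Fin n) K := (↑u⁻¹ : Matrix (Fin n) (Fin n) K) with hV
  have hUV : U * V = 1 := u.mul_inv
  have h1 : Ct * V = 1 := by rw [← hu]; exact hUV
  have hconj : Mt ^ q = U * Mt * V := by
    calc Mt ^ q = Mt ^ q * (Ct * V) := by rw [h1, mul_one]
      _ = (Mt ^ q * Ct) * V := by rw [mul_assoc]
      _ = (Ct * Mt) * V := by rw [hrel]
      _ = U * Mt * V := by rw [hu]
  have hdet_uv : U.det * V.det = 1 := by
    rw [← Matrix.det_mul, hUV, Matrix.det_one]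
  have hcharconj : (Mt ^ q).charpoly = Mt.charpoly := by
    apply Polynomial.funext
    intro x
    rw [my_charpoly_eval, my_charpoly_eval]
    have h2 : Matrix.scalar (Fin n) x - Mt ^ q
        = U * (Matrix.scalar (Fin n) x - Mt) * V := by
      have h6 : U * algebraMap K (Matrix (Fin n) (Fin n) K) x * V
          = algebraMap K (Matrix (Fin n) (Fin n) K) x := by
        rw [Algebra.algebraMap_eq_smul_one, mul_smul_comm, mul_one, smul_mul_assoc, hUV]
      rw [hconj, my_scalar_eq, mul_sub, sub_mul, h6]
    rw [h2, Matrix.det_mul, Matrix.det_mul, mul_comm U.det _, mul_assoc, hdet_uv, mul_one]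
  set R := Mt.charpoly.roots with hR
  have hmonic := Mt.charpoly_monic
  have hdeg : Mt.charpoly.natDegree = n := by
    rw [Matrix.charpoly_natDegree_eq_dim, Fintype.card_fin]
  have hsplits : Splits Mt.charpoly := IsAlgClosed.splits _
  have hcard : Multiset.card R = n := by
    have h5 := splits_iff_card_roots.mp hsplits
    rw [hdeg] at h5
    exact h5
  have hfact : Mt.charpoly = (R.map fun a => Polynomial.X - Polynomial.C a).prod := by
    conv_lhs => rw [hsplits.eq_prod_roots_of_monic hmonic]
  have hpow := my_charpoly_pow (q := q) Mt R hcard hfact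
  have hRq : R.map (fun a => a ^ q) = R := by
    have h3 : ((R.map fun a => a ^ q).map fun a => Polynomial.X - Polynomial.C a).prod
        = (R.map fun a => Polynomial.X - Polynomial.C a).prod := by
      rw [Multiset.map_map]
      rw [show ((fun a => Polynomial.X - Polynomial.C a) ∘ fun a : K => a ^ q) = fun a : K => Polynomial.X - Polynomial.C (a ^ q) from rfl]
      rw [← hpow, hcharconj, ← hfact]
    have h4 := congrArg Polynomial.roots h3
    rwa [roots_multiset_prod_X_sub_C, roots_multiset_prod_X_sub_C] at h4
  refine ⟨R, hcard, ?_, hfact⟩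
  intro a ha
  have hit : ∀ (j : ℕ) (x : K), (fun y : K => y ^ q)^[j] x = x ^ q ^ j := by
    intro j
    induction j with
    | zero => intro x; simp
    | succ j ih =>
      intro x
      rw [Function.iterate_succ_apply, ih, ← pow_mul, ← pow_succ']
  have hper := my_iterate_fix (fun y : K => y ^ q) R hRq (m := n) (le_of_eq hcard) a ha
  rw [hit] at hper
  exact hper

def myT (Om : Type) [Field Om] (n N i : ℕ) : Finset Om :=
  letI := Classical.decEq Om
  letI : Fintype {x : Om // x ∈ ((Polynomial.X ^ N - Polynomial.X : Om[X]).roots.toFinset)} := FinsetCoe.fintype _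
  letI : Fintype (Fin n → {x : Om // x ∈ ((Polynomial.X ^ N - Polynomial.X : Om[X]).roots.toFinset)}) := Pi.instFintype
  Finset.image
    (fun v : Fin n → {x : Om // x ∈ ((Polynomial.X ^ N - Polynomial.X : Om[X]).roots.toFinset)} =>
      ((Finset.univ.val.map fun j => (v j : Om)).map fun a => Polynomial.X - Polynomial.C a).prod.coeff i)
    Finset.univ

lemma mem_myT {Om : Type} [Field Om] (n N i : ℕ) (v : Fin n → Om)
    (hv : ∀ j, v j ∈ (Polynomial.X ^ N - Polynomial.X : Om[X]).roots) :
    ((Finset.univ.val.map v).map fun a => Polynomial.X - Polynomial.C a).prod.coeff i ∈ myT Om n N i := by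
  letI := Classical.decEq Om
  letI : Fintype {x : Om // x ∈ ((Polynomial.X ^ N - Polynomial.X : Om[X]).roots.toFinset)} := FinsetCoe.fintype _
  letI : Fintype (Fin n → {x : Om // x ∈ ((Polynomial.X ^ N - Polynomial.X : Om[X]).roots.toFinset)}) := Pi.instFintype
  unfold myT
  exact Finset.mem_image_of_mem _
    (Finset.mem_univ (fun j => (⟨v j, Multiset.mem_toFinset.mpr (hv j)⟩ :
      {x : Om // x ∈ ((Polynomial.X ^ N - Polynomial.X : Om[X]).roots.toFinset)})))

lemma my_enum_list {α : Type} (l : List α) :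
    ∃ v : Fin l.length → α, (l : Multiset α) = Multiset.map v Finset.univ.val := by
  refine ⟨l.get, ?_⟩
  have h1 : (Finset.univ : Finset (Fin l.length)).val
      = ((List.finRange l.length : List (Fin l.length)) : Multiset (Fin l.length)) := by
    rw [Fin.univ_def]
  rw [h1, Multiset.map_coe, List.map_get_finRange]

lemma my_enum {α : Type} {s : Multiset α} {n : ℕ} (h : Multiset.card s = n) :
    ∃ v : Fin n → α, s = Multiset.map v Finset.univ.val := by
  have hlen : s.toList.length = n := by rw [Multiset.length_toList, h]
  obtain ⟨v, hv⟩ := my_enum_list s.toList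
  rw [Multiset.coe_toList] at hv
  subst hlen
  exact ⟨v, hv⟩

lemma my_transfer {Om K : Type} [Field Om] [IsAlgClosed Om] [Field K] (e : Om →+* K)
    {n N i : ℕ} (hN : 2 ≤ N) (s : Multiset K) (hcard : Multiset.card s = n)
    (hper : ∀ a ∈ s, a ^ N = a) :
    ∃ t ∈ myT Om n N i, ((s.map fun a => Polynomial.X - Polynomial.C a).prod).coeff i = e t := by
  have hmono : (Polynomial.X ^ N - Polynomial.X : Om[X]).Monic := by
    apply monic_X_pow_sub
    rw [Polynomial.degree_X]
    exact_mod_cast lt_of_lt_of_le one_lt_two hN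
  have hfactZ : (Polynomial.X ^ N - Polynomial.X : Om[X])
      = (((Polynomial.X ^ N - Polynomial.X : Om[X]).roots).map fun z => Polynomial.X - Polynomial.C z).prod :=
    (IsAlgClosed.splits _).eq_prod_roots_of_monic hmono
  have hroot : ∀ a ∈ s, ∃ z ∈ (Polynomial.X ^ N - Polynomial.X : Om[X]).roots, e z = a := by
    intro a ha
    have h0 : (((Polynomial.X ^ N - Polynomial.X : Om[X]).map e).eval a) = 0 := by
      rw [Polynomial.map_sub, Polynomial.map_pow, Polynomial.map_X]
      simp [hper a ha]
    rw [hfactZ, Polynomial.map_multiset_prod, Multiset.map_map, Polynomial.eval_multiset_prod,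
      Multiset.map_map] at h0
    obtain ⟨w, hw⟩ := Multiset.mem_map.mp (Multiset.prod_eq_zero_iff.mp h0)
    refine ⟨w, hw.1, ?_⟩
    have h2 := hw.2
    simp only [Function.comp_apply, Polynomial.map_sub, Polynomial.map_X, Polynomial.map_C,
      Polynomial.eval_sub, Polynomial.eval_X, Polynomial.eval_C] at h2
    exact (sub_eq_zero.mp h2).symm
  obtain ⟨v, hv⟩ := my_enum hcard
  have hvmem : ∀ j : Fin n, v j ∈ s := by
    intro j
    rw [hv]
    exact Multiset.mem_map_of_mem _ (Finset.mem_univ_val j)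
  choose w hw1 hw2 using fun j => hroot (v j) (hvmem j)
  refine ⟨_, mem_myT n N i w hw1, ?_⟩
  have hcomm : (s.map fun a => Polynomial.X - Polynomial.C a).prod
      = (((Finset.univ.val.map w).map fun a => Polynomial.X - Polynomial.C a).prod).map e := by
    rw [Polynomial.map_multiset_prod, Multiset.map_map, Multiset.map_map, hv, Multiset.map_map]
    congr 1
    apply Multiset.map_congr rfl
    intro j _
    simp only [Function.comp_apply, Polynomial.map_sub, Polynomial.map_X, Polynomial.map_C]
    rw [hw2 j]
  rw [hcomm, Polynomial.coeff_map]

lemma my_clopen {Om A : Type} [Field Om] [CommRing A] [Algebra Om A] (T : Finset Om) (a : A)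
    (hmem : ∀ P : PrimeSpectrum A, ∃ t ∈ T, a - algebraMap Om A t ∈ P.asIdeal)
    (x y : PrimeSpectrum A) (hy : y ∈ connectedComponent x)
    {t : Om} (ht : t ∈ T) (hx : a - algebraMap Om A t ∈ x.asIdeal) :
    a - algebraMap Om A t ∈ y.asIdeal := by
  classical
  have huniq : ∀ (P : PrimeSpectrum A) (t' : Om), a - algebraMap Om A t' ∈ P.asIdeal →
      a - algebraMap Om A t ∈ P.asIdeal → t' = t := by
    intro P t' h1 h2
    by_contra hne
    have hd : (a - algebraMap Om A t') - (a - algebraMap Om A t) = algebraMap Om A (t - t') := by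
      rw [_root_.map_sub]
      ring
    have hdiff : algebraMap Om A (t - t') ∈ P.asIdeal := by
      rw [← hd]
      exact P.asIdeal.sub_mem h1 h2
    have hunit : IsUnit (algebraMap Om A (t - t')) :=
      (isUnit_iff_ne_zero.mpr (sub_ne_zero.mpr fun h => hne h.symm)).map (algebraMap Om A)
    exact P.isPrime.ne_top (P.asIdeal.eq_top_of_isUnit_mem hdiff hunit)
  set U : Set (PrimeSpectrum A) := PrimeSpectrum.zeroLocus {a - algebraMap Om A t} with hU
  have hUc : Uᶜ = PrimeSpectrum.zeroLocus
      {(T.erase t).prod fun t' => a - algebraMap Om A t'} := by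
    ext P
    simp only [Set.mem_compl_iff, hU, PrimeSpectrum.mem_zeroLocus,
      Set.singleton_subset_iff, SetLike.mem_coe]
    constructor
    · intro hP
      obtain ⟨t', ht', hmemP⟩ := hmem P
      have hne : t' ≠ t := fun h => hP (h ▸ hmemP)
      obtain ⟨c, hc⟩ := Finset.dvd_prod_of_mem (fun t'' => a - algebraMap Om A t'')
        (Finset.mem_erase.mpr ⟨hne, ht'⟩)
      rw [hc]
      exact Ideal.mul_mem_right _ _ hmemP
    · intro hP hcon
      haveI := P.isPrime
      obtain ⟨t', ht', h1⟩ := Ideal.IsPrime.prod_mem_iff.mp hP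
      exact (Finset.mem_erase.mp ht').1 (huniq P t' h1 hcon)
  have hclopen : IsClopen U := by
    constructor
    · exact PrimeSpectrum.isClosed_zeroLocus _
    · rw [← isClosed_compl_iff, hUc]
      exact PrimeSpectrum.isClosed_zeroLocus _
  have hxU : x ∈ U := by
    rw [hU]
    rw [PrimeSpectrum.mem_zeroLocus, Set.singleton_subset_iff]
    exact hx
  have hyU : y ∈ U := hclopen.connectedComponent_subset hxU hy
  rw [hU, PrimeSpectrum.mem_zeroLocus, Set.singleton_subset_iff] at hyU
  exact hyU

lemma my_coeff_mem {Om A : Type} [Field Om] [IsAlgClosed Om] [CommRing A] [Algebra Om A]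
    {n q : ℕ} (hq : 2 ≤ q)
    (F G : Matrix (Fin n) (Fin n) A) (hdet : IsUnit F.det) (hrel : F * G = G ^ q * F)
    (i : ℕ) (P : PrimeSpectrum A) :
    ∃ t ∈ myT Om n (q ^ (Nat.factorial n)) i,
      G.charpoly.coeff i - algebraMap Om A t ∈ P.asIdeal := by
  haveI := P.isPrime
  let Q := A ⧸ P.asIdeal
  let K := AlgebraicClosure (FractionRing Q)
  let φ : A →+* K := (algebraMap (FractionRing Q) K).comp
    ((algebraMap Q (FractionRing Q)).comp (Ideal.Quotient.mk P.asIdeal))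
  have hker : ∀ z : A, φ z = 0 → z ∈ P.asIdeal := by
    intro z h
    have h1 : (algebraMap Q (FractionRing Q)) ((Ideal.Quotient.mk P.asIdeal) z) = 0 := by
      apply RingHom.injective (algebraMap (FractionRing Q) K)
      rw [_root_.map_zero]
      exact h
    have h2 : (Ideal.Quotient.mk P.asIdeal) z = 0 :=
      IsFractionRing.injective Q (FractionRing Q) (by rw [_root_.map_zero]; exact h1)
    exact Ideal.Quotient.eq_zero_iff_mem.mp h2
  have hdetK : IsUnit (F.map φ).det := by
    have h5 := RingHom.map_det φ F
    rw [RingHom.mapMatrix_apply] at h5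
    rw [← h5]
    exact hdet.map φ
  have hrelK : (F.map φ) * (G.map φ) = (G.map φ) ^ q * (F.map φ) := by
    have h3 := congrArg (fun M : Matrix (Fin n) (Fin n) A => RingHom.mapMatrix φ M) hrel
    simpa only [_root_.map_mul, _root_.map_pow, RingHom.mapMatrix_apply] using h3
  obtain ⟨s, hcard, hper, hfact⟩ := my_main (G.map φ) (F.map φ) hdetK hrelK
  have hN : 2 ≤ q ^ (Nat.factorial n) := by
    refine le_trans hq ?_
    have h6 : q ^ 1 ≤ q ^ (Nat.factorial n) :=
      Nat.pow_le_pow_right (le_trans one_le_two hq) (Nat.factorial_pos n)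
    simpa using h6
  obtain ⟨t, htT, hcoeff⟩ := my_transfer (φ.comp (algebraMap Om A)) (i := i) hN s hcard hper
  refine ⟨t, htT, hker _ ?_⟩
  rw [_root_.map_sub]
  have h4 : φ (G.charpoly.coeff i) = ((G.map φ).charpoly).coeff i := by
    rw [Matrix.charpoly_map, Polynomial.coeff_map]
  rw [h4, hfact, hcoeff]
  show φ.comp (algebraMap Om A) t - φ (algebraMap Om A t) = 0
  rw [RingHom.comp_apply, sub_self]

end MyHelpers


/-- If two `Ω`-points (`Ω` algebraically closed of characteristic zero) of
`Spec (S ⊗_W Ω)` lie in the same connected component, then the characteristic polynomials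
of the corresponding specializations of the universal matrix `σ` coincide. -/
theorem statement_12 (p : ℕ) (hp : p.Prime) (hpl : p ≠ l)
    (r : ℕ) (hr : 1 ≤ r) (hq : q = p ^ r) (hq2 : 2 ≤ q) (hn : 1 ≤ n)
    (Ω : Type) [Field Ω] [IsAlgClosed Ω] [CharZero Ω] [Algebra (Wk l k) Ω]
    (ψ₁ ψ₂ : (Ω ⊗[Wk l k] Sring (Wk l k) n q) →ₐ[Ω] Ω)
    (hcc : (⟨RingHom.ker ψ₁.toRingHom, RingHom.ker_isPrime _⟩ :
        PrimeSpectrum (Ω ⊗[Wk l k] Sring (Wk l k) n q)) ∈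
      connectedComponent (⟨RingHom.ker ψ₂.toRingHom, RingHom.ker_isPrime _⟩ :
        PrimeSpectrum (Ω ⊗[Wk l k] Sring (Wk l k) n q))) :
    ((sigS (Wk l k) n q).map fun s => ψ₁
        ((Algebra.TensorProduct.includeRight :
          Sring (Wk l k) n q →ₐ[Wk l k] Ω ⊗[Wk l k] Sring (Wk l k) n q) s)).charpoly =
    ((sigS (Wk l k) n q).map fun s => ψ₂
        ((Algebra.TensorProduct.includeRight :
          Sring (Wk l k) n q →ₐ[Wk l k] Ω ⊗[Wk l k] Sring (Wk l k) n q) s)).charpoly := by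
  classical
  set A := Ω ⊗[Wk l k] Sring (Wk l k) n q with hA
  set f := (Algebra.TensorProduct.includeRight :
      Sring (Wk l k) n q →ₐ[Wk l k] Ω ⊗[Wk l k] Sring (Wk l k) n q).toRingHom with hf
  -- the universal relation in S
  have hrelS : frS (Wk l k) n q * sigS (Wk l k) n q
      = sigS (Wk l k) n q ^ q * frS (Wk l k) n q := by
    have h0 : (RingHom.mapMatrix (Ideal.Quotient.mk (relIdeal (Wk l k) n q)))
        (frLoc (Wk l k) n * sigLoc (Wk l k) n - sigLoc (Wk l k) n ^ q * frLoc (Wk l k) n)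
        = frS (Wk l k) n q * sigS (Wk l k) n q
          - sigS (Wk l k) n q ^ q * frS (Wk l k) n q := by
      rw [map_sub, _root_.map_mul, _root_.map_mul, map_pow]
      rfl
    have hzero : frS (Wk l k) n q * sigS (Wk l k) n q
        - sigS (Wk l k) n q ^ q * frS (Wk l k) n q = 0 := by
      rw [← h0]
      ext i j
      simp only [RingHom.mapMatrix_apply, Matrix.map_apply, Matrix.zero_apply]
      apply Ideal.Quotient.eq_zero_iff_mem.mpr
      exact Ideal.subset_span ⟨i, j, rfl⟩
    have := sub_eq_zero.mp hzero
    exact this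
  -- invertibility of the determinant of Fr
  have hdetS : IsUnit (frS (Wk l k) n q).det := by
    have hu : IsUnit (algebraMap (MvPolynomial (MatVar n) (Wk l k)) (LocS (Wk l k) n)
        (detElt (Wk l k) n)) := IsLocalization.Away.algebraMap_isUnit _
    have hu2 : IsUnit ((algebraMap (MvPolynomial (MatVar n) (Wk l k)) (LocS (Wk l k) n))
        ((frPoly (Wk l k) n).det * (sigPoly (Wk l k) n).det)) := hu
    rw [_root_.map_mul] at hu2
    have e1 : (algebraMap (MvPolynomial (MatVar n) (Wk l k)) (LocS (Wk l k) n))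
        (frPoly (Wk l k) n).det = (frLoc (Wk l k) n).det := by
      rw [RingHom.map_det]
      rfl
    have e2 : (algebraMap (MvPolynomial (MatVar n) (Wk l k)) (LocS (Wk l k) n))
        (sigPoly (Wk l k) n).det = (sigLoc (Wk l k) n).det := by
      rw [RingHom.map_det]
      rfl
    rw [e1, e2] at hu2
    have hloc : IsUnit (frLoc (Wk l k) n).det := isUnit_of_mul_isUnit_left hu2
    have e3 : (frS (Wk l k) n q).det
        = (Ideal.Quotient.mk (relIdeal (Wk l k) n q)) (frLoc (Wk l k) n).det := by
      rw [RingHom.map_det]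
      rfl
    rw [e3]
    exact hloc.map _
  -- matrices over the tensor product
  set FA : Matrix (Fin n) (Fin n) A := (frS (Wk l k) n q).map f with hFA
  set GA : Matrix (Fin n) (Fin n) A := (sigS (Wk l k) n q).map f with hGA
  have hrelA : FA * GA = GA ^ q * FA := by
    have h3 := congrArg (RingHom.mapMatrix f) hrelS
    rw [_root_.map_mul, _root_.map_mul, map_pow] at h3
    exact h3
  have hdetA : IsUnit FA.det := by
    have h5 := RingHom.map_det f (frS (Wk l k) n q)
    rw [RingHom.mapMatrix_apply] at h5
    rw [hFA, ← h5]
    exact hdetS.map f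
  -- reduce to the coefficients of the characteristic polynomial over A
  have hM1 : ((sigS (Wk l k) n q).map fun s => ψ₁
      ((Algebra.TensorProduct.includeRight :
        Sring (Wk l k) n q →ₐ[Wk l k] Ω ⊗[Wk l k] Sring (Wk l k) n q) s))
      = GA.map ψ₁.toRingHom := by
    rw [hGA, Matrix.map_map]
    rfl
  have hM2 : ((sigS (Wk l k) n q).map fun s => ψ₂
      ((Algebra.TensorProduct.includeRight :
        Sring (Wk l k) n q →ₐ[Wk l k] Ω ⊗[Wk l k] Sring (Wk l k) n q) s))
      = GA.map ψ₂.toRingHom := by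
    rw [hGA, Matrix.map_map]
    rfl
  rw [hM1, hM2, Matrix.charpoly_map GA ψ₁.toRingHom, Matrix.charpoly_map GA ψ₂.toRingHom]
  apply Polynomial.ext
  intro i
  rw [Polynomial.coeff_map, Polynomial.coeff_map]
  set c : A := GA.charpoly.coeff i with hc
  -- the two points of the spectrum
  set x : PrimeSpectrum A := ⟨RingHom.ker ψ₂.toRingHom, RingHom.ker_isPrime _⟩ with hx
  set y : PrimeSpectrum A := ⟨RingHom.ker ψ₁.toRingHom, RingHom.ker_isPrime _⟩ with hy
  obtain ⟨t, htT, hmem2⟩ := my_coeff_mem (Om := Ω) hq2 FA GA hdetA hrelA i x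
  have hmem1 : c - algebraMap Ω A t ∈ y.asIdeal :=
    my_clopen (myT Ω n (q ^ (Nat.factorial n)) i) c
      (fun P => my_coeff_mem (Om := Ω) hq2 FA GA hdetA hrelA i P) x y hcc htT hmem2
  have e2 : ψ₂ c = t := by
    have h := RingHom.mem_ker.mp hmem2
    rw [_root_.map_sub] at h
    have h7 : ψ₂.toRingHom (algebraMap Ω A t) = t := by
      show ψ₂ (algebraMap Ω A t) = t
      rw [AlgHom.commutes]
      simp
    rw [h7] at h
    exact sub_eq_zero.mp h
  have e1 : ψ₁ c = t := by
    have h := RingHom.mem_ker.mp hmem1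
    rw [_root_.map_sub] at h
    have h7 : ψ₁.toRingHom (algebraMap Ω A t) = t := by
      show ψ₁ (algebraMap Ω A t) = t
      rw [AlgHom.commutes]
      simp
    rw [h7] at h
    exact sub_eq_zero.mp h
  show ψ₁ c = ψ₂ c
  rw [e1, e2]


end
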